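/- As x → ∞, one has lim_{x→∞} x² · [ (e^{−x}/(1 − e^{−x}))·∫_0^x g(t)/t dt − ( e^{−x}·g(x)/(1 − e^{−x}) )² ] = 0; that is, the variance h²(x) − (h¹(x))² of the redistributed unit load is o(1/x²) as x → ∞. -/

import Mathlib

open Real Filter

/-- `g x = ∫_0^x (e^z − 1)/z dz`, with the integrand extended continuously
by the value `1` at `z = 0`. -/
noncomputable def g (x : ℝ) : ℝ :=
  ∫ z in (0:ℝ)..x, if z = 0 then 1 else (Real.exp z - 1) / z

/-- `h¹(x) = e^{−x} g(x)/(1 − e^{−x})`. -/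
noncomputable def h1 (x : ℝ) : ℝ := Real.exp (-x) * g x / (1 - Real.exp (-x))

/-- `h²(x) = (e^{−x}/(1 − e^{−x}))·∫_0^x g(t)/t dt`. -/
noncomputable def h2 (x : ℝ) : ℝ :=
  Real.exp (-x) / (1 - Real.exp (-x)) * ∫ t in (0:ℝ)..x, if t = 0 then 1 else g t / t

open Topology

/- ### Auxiliary development -/

noncomputable def f0 (z : ℝ) : ℝ := if z = 0 then 1 else (Real.exp z - 1) / z

noncomputable def G (x : ℝ) : ℝ := ∫ t in (0:ℝ)..x, if t = 0 then 1 else g t / t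

noncomputable def fG (t : ℝ) : ℝ := if t = 0 then 1 else g t / t

lemma expneg_mul_exp (t : ℝ) : Real.exp (-t) * Real.exp t = 1 := by
  rw [← Real.exp_add]; simp

lemma exp_mul_expneg_mul (ψ : ℝ → ℝ) (z : ℝ) :
    Real.exp z * (Real.exp (-z) * ψ z) = ψ z := by
  rw [← mul_assoc, mul_comm (Real.exp z), expneg_mul_exp, one_mul]

/-- General continuity helper for `z ↦ F z / z` extended by `1`. -/
lemma cont_ratio {F : ℝ → ℝ} (hF : Continuous F) (hF0 : F 0 = 0)
    (hd : HasDerivAt F 1 0) :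
    Continuous (fun z : ℝ => if z = 0 then 1 else F z / z) := by
  rw [continuous_iff_continuousAt]
  intro x
  rcases eq_or_ne x 0 with rfl | hx
  · have h1 : Tendsto (fun z : ℝ => F z / z) (𝓝[≠] (0:ℝ)) (𝓝 1) := by
      refine (hasDerivAt_iff_tendsto_slope.mp hd).congr' ?_
      filter_upwards [self_mem_nhdsWithin] with z hz
      simp [slope_def_field, hF0]
    have h2 : Tendsto (fun z : ℝ => if z = 0 then 1 else F z / z) (𝓝 (0:ℝ)) (𝓝 1) := by
      rw [← nhdsNE_sup_pure, tendsto_sup]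
      constructor
      · refine h1.congr' ?_
        filter_upwards [self_mem_nhdsWithin] with z hz
        exact (if_neg hz).symm
      · have := tendsto_pure_nhds (fun z : ℝ => if z = 0 then 1 else F z / z) 0
        simpa using this
    have hval : (fun z : ℝ => if z = 0 then 1 else F z / z) 0 = 1 := by simp
    simpa [ContinuousAt] using h2
  · have hc : ContinuousAt (fun z : ℝ => F z / z) x :=
      (hF.continuousAt).div continuousAt_id hx
    refine hc.congr ?_
    filter_upwards [eventually_ne_nhds hx] with z hz
    exact (if_neg hz).symm

lemma cont_f0 : Continuous f0 := by
  have hd : HasDerivAt (fun z : ℝ => Real.exp z - 1) 1 0 := by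
    simpa using (Real.hasDerivAt_exp 0).sub_const 1
  exact cont_ratio (continuous_exp.sub continuous_const) (by simp) hd

lemma g_eq (x : ℝ) : g x = ∫ z in (0:ℝ)..x, f0 z := rfl

lemma g_hasDeriv (x : ℝ) : HasDerivAt g (f0 x) x := by
  have : HasDerivAt (fun u => ∫ z in (0:ℝ)..u, f0 z) (f0 x) x :=
    intervalIntegral.integral_hasDerivAt_right
      (cont_f0.intervalIntegrable _ _)
      (cont_f0.stronglyMeasurableAtFilter _ _)
      cont_f0.continuousAt
  exact this

lemma g_cont : Continuous g :=
  Differentiable.continuous (fun x => (g_hasDeriv x).differentiableAt)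

lemma g_zero : g 0 = 0 := intervalIntegral.integral_same

lemma cont_fG : Continuous fG := by
  have hd : HasDerivAt g 1 0 := by simpa [f0] using g_hasDeriv 0
  exact cont_ratio g_cont g_zero hd

lemma G_eq (x : ℝ) : G x = ∫ t in (0:ℝ)..x, fG t := rfl

lemma G_zero : G 0 = 0 := intervalIntegral.integral_same

lemma G_hasDeriv (x : ℝ) : HasDerivAt G (fG x) x := by
  have : HasDerivAt (fun u => ∫ t in (0:ℝ)..u, fG t) (fG x) x :=
    intervalIntegral.integral_hasDerivAt_right
      (cont_fG.intervalIntegrable _ _)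
      (cont_fG.stronglyMeasurableAtFilter _ _)
      cont_fG.continuousAt
  exact this

lemma G_cont : Continuous G :=
  Differentiable.continuous (fun x => (G_hasDeriv x).differentiableAt)

lemma tendsto_one_sub_expneg : Tendsto (fun x : ℝ => 1 - Real.exp (-x)) atTop (𝓝 1) := by
  have h : Tendsto (fun _ : ℝ => (1:ℝ)) atTop (𝓝 1) := tendsto_const_nhds
  simpa using h.sub tendsto_exp_neg_atTop_nhds_zero

/-- Abelian lemma: if `ψ → L` then `e^{-x} ∫_0^x e^z ψ(z) dz → L`. -/
lemma abel {ψ : ℝ → ℝ} (hc : Continuous ψ) {L : ℝ}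
    (hL : Tendsto ψ atTop (𝓝 L)) :
    Tendsto (fun x : ℝ => Real.exp (-x) * ∫ z in (0:ℝ)..x, Real.exp z * ψ z)
      atTop (𝓝 L) := by
  set φ : ℝ → ℝ := fun z => Real.exp z * (ψ z - L) with hφ
  have hφc : Continuous φ := continuous_exp.mul (hc.sub continuous_const)
  have key : ∀ x : ℝ, Real.exp (-x) * ∫ z in (0:ℝ)..x, Real.exp z * ψ z
      = Real.exp (-x) * (∫ z in (0:ℝ)..x, φ z) + L * (1 - Real.exp (-x)) := by
    intro x
    have hsplit : (∫ z in (0:ℝ)..x, Real.exp z * ψ z)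
        = (∫ z in (0:ℝ)..x, φ z) + L * (Real.exp x - 1) := by
      have h1 : (∫ z in (0:ℝ)..x, Real.exp z * ψ z)
          = (∫ z in (0:ℝ)..x, (φ z + L * Real.exp z)) := by
        congr 1; funext z; simp only [hφ]; ring
      rw [h1, intervalIntegral.integral_add (g := fun z => L * Real.exp z) (hφc.intervalIntegrable _ _)
        ((continuous_const.mul continuous_exp).intervalIntegrable _ _),
        intervalIntegral.integral_const_mul, integral_exp]
      simp
    rw [hsplit, mul_add]
    congr 1
    rw [← mul_assoc, mul_comm (Real.exp (-x)) L, mul_assoc, mul_sub,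
      expneg_mul_exp, mul_one]
  have hmain : Tendsto (fun x : ℝ => Real.exp (-x) * ∫ z in (0:ℝ)..x, φ z)
      atTop (𝓝 0) := by
    rw [NormedAddCommGroup.tendsto_nhds_zero]
    intro ε hε
    have hev : ∀ᶠ z in atTop, |ψ z - L| ≤ ε / 2 := by
      have := Metric.tendsto_nhds.mp hL (ε / 2) (by positivity)
      filter_upwards [this] with z hz
      rw [Real.dist_eq] at hz; exact hz.le
    obtain ⟨M, hM⟩ := eventually_atTop.mp hev
    set C := |∫ z in (0:ℝ)..M, φ z| with hC
    have hCx : Tendsto (fun x : ℝ => Real.exp (-x) * C) atTop (𝓝 0) := by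
      simpa using tendsto_exp_neg_atTop_nhds_zero.mul_const C
    have hCev : ∀ᶠ x in atTop, Real.exp (-x) * C < ε / 2 := by
      have := Metric.tendsto_nhds.mp hCx (ε / 2) (by positivity)
      filter_upwards [this] with x hx
      rw [Real.dist_eq, sub_zero] at hx
      calc Real.exp (-x) * C ≤ |Real.exp (-x) * C| := le_abs_self _
        _ < ε / 2 := hx
    filter_upwards [eventually_ge_atTop M, hCev] with x hxM hCx2
    have hsplit : (∫ z in (0:ℝ)..x, φ z)
        = (∫ z in (0:ℝ)..M, φ z) + ∫ z in M..x, φ z :=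
      (intervalIntegral.integral_add_adjacent_intervals
        (hφc.intervalIntegrable _ _) (hφc.intervalIntegrable _ _)).symm
    have htail : |∫ z in M..x, φ z| ≤ ε / 2 * Real.exp x := by
      have h1 : |∫ z in M..x, φ z| ≤ ∫ z in M..x, |φ z| :=
        intervalIntegral.abs_integral_le_integral_abs hxM
      have h2 : (∫ z in M..x, |φ z|) ≤ ∫ z in M..x, Real.exp z * (ε / 2) := by
        apply intervalIntegral.integral_mono_on hxM
          (hφc.abs.intervalIntegrable _ _)
          ((continuous_exp.mul continuous_const).intervalIntegrable _ _)
        intro z hz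
        have habs : |φ z| = Real.exp z * |ψ z - L| := by
          rw [hφ, abs_mul, abs_of_pos (Real.exp_pos z)]
        rw [habs]
        exact mul_le_mul_of_nonneg_left (hM z hz.1) (Real.exp_pos z).le
      have h3 : (∫ z in M..x, Real.exp z * (ε / 2)) ≤ ε / 2 * Real.exp x := by
        rw [intervalIntegral.integral_mul_const, integral_exp]
        have hEM : (0:ℝ) < Real.exp M := Real.exp_pos M
        nlinarith [hε]
      linarith
    have hx0 : (0:ℝ) < Real.exp (-x) := Real.exp_pos _
    calc ‖Real.exp (-x) * ∫ z in (0:ℝ)..x, φ z‖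
        = Real.exp (-x) * |∫ z in (0:ℝ)..x, φ z| := by
          rw [Real.norm_eq_abs, abs_mul, abs_of_pos hx0]
      _ ≤ Real.exp (-x) * (C + ε / 2 * Real.exp x) := by
          apply mul_le_mul_of_nonneg_left _ hx0.le
          rw [hsplit]
          calc |(∫ z in (0:ℝ)..M, φ z) + ∫ z in M..x, φ z|
              ≤ |∫ z in (0:ℝ)..M, φ z| + |∫ z in M..x, φ z| := abs_add_le _ _
            _ ≤ C + ε / 2 * Real.exp x := add_le_add le_rfl htail
      _ = Real.exp (-x) * C + ε / 2 * (Real.exp (-x) * Real.exp x) := by ring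
      _ = Real.exp (-x) * C + ε / 2 := by rw [expneg_mul_exp]; ring
      _ < ε / 2 + ε / 2 := by linarith
      _ = ε := by ring
  have hrest : Tendsto (fun x : ℝ => L * (1 - Real.exp (-x))) atTop (𝓝 L) := by
    have h := tendsto_one_sub_expneg
    have := (tendsto_const_nhds : Tendsto (fun _ : ℝ => L) atTop (𝓝 L)).mul h
    simpa using this
  have hsum := hmain.add hrest
  rw [zero_add] at hsum
  exact hsum.congr (fun x => (key x).symm)

/-- FTC identity: `x * g x = ∫_0^x (g t + (e^t - 1)) dt`. -/
lemma I1 (x : ℝ) : x * g x = ∫ t in (0:ℝ)..x, (g t + (Real.exp t - 1)) := by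
  have h : ∀ t : ℝ, HasDerivAt (fun u : ℝ => u * g u) (g t + (Real.exp t - 1)) t := by
    intro t
    have h' : HasDerivAt (fun u : ℝ => u * g u) (1 * g t + t * f0 t) t :=
      (hasDerivAt_id t).mul (g_hasDeriv t)
    have heq : 1 * g t + t * f0 t = g t + (Real.exp t - 1) := by
      rcases eq_or_ne t 0 with rfl | ht
      · simp [f0]
      · rw [f0, if_neg ht, one_mul]
        field_simp
    rw [heq] at h'; exact h'
  have hint := intervalIntegral.integral_eq_sub_of_hasDerivAt
    (f' := fun t => g t + (Real.exp t - 1)) (a := 0) (b := x)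
    (fun t _ => h t)
    ((g_cont.add (continuous_exp.sub continuous_const)).intervalIntegrable _ _)
  rw [hint, g_zero]; ring

/-- FTC identity: `x * G x = ∫_0^x (G t + g t) dt`. -/
lemma I2 (x : ℝ) : x * G x = ∫ t in (0:ℝ)..x, (G t + g t) := by
  have h : ∀ t : ℝ, HasDerivAt (fun u : ℝ => u * G u) (G t + g t) t := by
    intro t
    have h' : HasDerivAt (fun u : ℝ => u * G u) (1 * G t + t * fG t) t :=
      (hasDerivAt_id t).mul (G_hasDeriv t)
    have heq : 1 * G t + t * fG t = G t + g t := by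
      rcases eq_or_ne t 0 with rfl | ht
      · simp [fG, g_zero]
      · rw [fG, if_neg ht, one_mul]
        field_simp
    rw [heq] at h'; exact h'
  have hint := intervalIntegral.integral_eq_sub_of_hasDerivAt
    (f' := fun t => G t + g t) (a := 0) (b := x)
    (fun t _ => h t)
    ((G_cont.add g_cont).intervalIntegrable _ _)
  rw [hint, G_zero]; ring

/-- FTC identity: `x^2 * G x = ∫_0^x (2 t G t + t g t) dt`. -/
lemma I3 (x : ℝ) : x ^ 2 * G x = ∫ t in (0:ℝ)..x, (2 * t * G t + t * g t) := by
  have h : ∀ t : ℝ, HasDerivAt (fun u : ℝ => u ^ 2 * G u) (2 * t * G t + t * g t) t := by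
    intro t
    have h' : HasDerivAt (fun u : ℝ => u ^ 2 * G u)
        ((↑2 * t ^ 1) * G t + t ^ 2 * fG t) t :=
      (hasDerivAt_pow 2 t).mul (G_hasDeriv t)
    have heq : (↑2 * t ^ 1) * G t + t ^ 2 * fG t = 2 * t * G t + t * g t := by
      rcases eq_or_ne t 0 with rfl | ht
      · simp [fG, g_zero]
      · rw [fG, if_neg ht]
        field_simp
    rw [heq] at h'; exact h'
  have hint := intervalIntegral.integral_eq_sub_of_hasDerivAt
    (f' := fun t => 2 * t * G t + t * g t) (a := 0) (b := x)
    (fun t _ => h t)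
    ((((continuous_const.mul continuous_id).mul G_cont).add
      (continuous_id.mul g_cont)).intervalIntegrable _ _)
  rw [hint, G_zero]; ring

lemma L0 : Tendsto (fun x : ℝ => Real.exp (-x) * g x) atTop (𝓝 0) := by
  have hψ : Continuous (fun z : ℝ => Real.exp (-z) * f0 z) :=
    (continuous_exp.comp continuous_neg).mul cont_f0
  have hlim : Tendsto (fun z : ℝ => Real.exp (-z) * f0 z) atTop (𝓝 0) := by
    have h1 : Tendsto (fun z : ℝ => (1 - Real.exp (-z)) * z⁻¹) atTop (𝓝 0) := by
      have := tendsto_one_sub_expneg.mul tendsto_inv_atTop_zero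
      simpa using this
    refine h1.congr' ?_
    filter_upwards [eventually_gt_atTop (0:ℝ)] with z hz
    rw [f0, if_neg hz.ne', div_eq_mul_inv, ← mul_assoc]
    congr 1
    rw [mul_sub, expneg_mul_exp, mul_one]
  have h := abel hψ hlim
  refine h.congr (fun x => ?_)
  congr 1
  rw [g_eq]
  congr 1
  funext z
  exact exp_mul_expneg_mul f0 z

lemma L1 : Tendsto (fun x : ℝ => Real.exp (-x) * (x * g x)) atTop (𝓝 1) := by
  have hψ : Continuous (fun t : ℝ => Real.exp (-t) * (g t + (Real.exp t - 1))) :=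
    (continuous_exp.comp continuous_neg).mul
      (g_cont.add (continuous_exp.sub continuous_const))
  have hlim : Tendsto (fun t : ℝ => Real.exp (-t) * (g t + (Real.exp t - 1)))
      atTop (𝓝 1) := by
    have h1 : Tendsto (fun t : ℝ => Real.exp (-t) * g t + (1 - Real.exp (-t)))
        atTop (𝓝 1) := by
      have := L0.add tendsto_one_sub_expneg
      simpa using this
    refine h1.congr (fun t => ?_)
    rw [mul_add, mul_sub, expneg_mul_exp, mul_one]
  have h := abel hψ hlim
  refine h.congr (fun x => ?_)
  rw [I1]
  congr 1
  congr 1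
  funext t
  exact exp_mul_expneg_mul (fun t => g t + (Real.exp t - 1)) t

lemma L2 : Tendsto (fun x : ℝ => Real.exp (-x) * G x) atTop (𝓝 0) := by
  have hψ : Continuous (fun t : ℝ => Real.exp (-t) * fG t) :=
    (continuous_exp.comp continuous_neg).mul cont_fG
  have hlim : Tendsto (fun t : ℝ => Real.exp (-t) * fG t) atTop (𝓝 0) := by
    have hinv : Tendsto (fun t : ℝ => (t ^ 2)⁻¹) atTop (𝓝 0) :=
      tendsto_inv_atTop_zero.comp (tendsto_pow_atTop two_ne_zero)
    have h1 : Tendsto (fun t : ℝ => Real.exp (-t) * (t * g t) * (t ^ 2)⁻¹)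
        atTop (𝓝 0) := by
      have := L1.mul hinv
      simpa using this
    refine h1.congr' ?_
    filter_upwards [eventually_gt_atTop (0:ℝ)] with t ht
    rw [fG, if_neg ht.ne']
    field_simp
  have h := abel hψ hlim
  refine h.congr (fun x => ?_)
  congr 1
  rw [G_eq]
  congr 1
  funext t
  exact exp_mul_expneg_mul fG t

lemma L3 : Tendsto (fun x : ℝ => Real.exp (-x) * (x * G x)) atTop (𝓝 0) := by
  have hψ : Continuous (fun t : ℝ => Real.exp (-t) * (G t + g t)) :=
    (continuous_exp.comp continuous_neg).mul (G_cont.add g_cont)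
  have hlim : Tendsto (fun t : ℝ => Real.exp (-t) * (G t + g t)) atTop (𝓝 0) := by
    have := L2.add L0
    refine (by simpa using this : Tendsto (fun t : ℝ =>
      Real.exp (-t) * G t + Real.exp (-t) * g t) atTop (𝓝 0)).congr (fun t => ?_)
    ring
  have h := abel hψ hlim
  refine h.congr (fun x => ?_)
  rw [I2]
  congr 1
  congr 1
  funext t
  exact exp_mul_expneg_mul (fun t => G t + g t) t

lemma L4 : Tendsto (fun x : ℝ => Real.exp (-x) * (x ^ 2 * G x)) atTop (𝓝 1) := by
  have hψ : Continuous (fun t : ℝ => Real.exp (-t) * (2 * t * G t + t * g t)) :=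
    (continuous_exp.comp continuous_neg).mul
      (((continuous_const.mul continuous_id).mul G_cont).add
        (continuous_id.mul g_cont))
  have hlim : Tendsto (fun t : ℝ => Real.exp (-t) * (2 * t * G t + t * g t))
      atTop (𝓝 1) := by
    have h2 : Tendsto (fun t : ℝ =>
        2 * (Real.exp (-t) * (t * G t)) + Real.exp (-t) * (t * g t)) atTop (𝓝 1) := by
      have hc : Tendsto (fun _ : ℝ => (2:ℝ)) atTop (𝓝 2) := tendsto_const_nhds
      have := (hc.mul L3).add L1
      simpa using this
    refine h2.congr (fun t => ?_)
    ring
  have h := abel hψ hlim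
  refine h.congr (fun x => ?_)
  rw [I3]
  congr 1
  congr 1
  funext t
  exact exp_mul_expneg_mul (fun t => 2 * t * G t + t * g t) t

/-- The variance `h²(x) − (h¹(x))²` of the redistributed unit load is `o(1/x²)`
as `x → ∞`. -/
theorem variance_asymptotic :
    Tendsto (fun x : ℝ => x ^ 2 * (h2 x - (h1 x) ^ 2)) atTop (nhds 0) := by
  have hden := tendsto_one_sub_expneg
  have hA : Tendsto (fun x : ℝ => Real.exp (-x) * (x ^ 2 * G x) / (1 - Real.exp (-x)))
      atTop (𝓝 1) := by simpa [Pi.div_def] using L4.div hden one_ne_zero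
  have hB : Tendsto (fun x : ℝ => Real.exp (-x) * (x * g x) / (1 - Real.exp (-x)))
      atTop (𝓝 1) := by simpa [Pi.div_def] using L1.div hden one_ne_zero
  have hAB : Tendsto (fun x : ℝ =>
      Real.exp (-x) * (x ^ 2 * G x) / (1 - Real.exp (-x))
        - (Real.exp (-x) * (x * g x) / (1 - Real.exp (-x))) ^ 2)
      atTop (𝓝 0) := by
    have := hA.sub (hB.pow 2)
    simpa using this
  refine hAB.congr' ?_
  filter_upwards [eventually_gt_atTop (0:ℝ)] with x hx
  have hlt : Real.exp (-x) < 1 := by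
    rw [Real.exp_lt_one_iff]; linarith
  have hne : 1 - Real.exp (-x) ≠ 0 := by linarith
  show _ = x ^ 2 * (h2 x - h1 x ^ 2)
  have hh2 : h2 x = Real.exp (-x) / (1 - Real.exp (-x)) * G x := rfl
  rw [hh2, h1]
  field_simp
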